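/- Let H be a finite cyclic group and let x, y ∈ H. Then the multiset {x, y} is Nielsen equivalent (within H) to a multiset of the form {z, e}, where e is the identity element of H. -/

import Mathlib

open scoped Classical

section Defs

variable {G : Type*} [Group G]

/-- A single Nielsen move on a finite multiset of group elements: replace one
occurrence of `g` by `g⁻¹`, or by `h * g` or `g * h` where `h` is another
occurrence in the multiset. -/
def NielsenMove (S T : Multiset G) : Prop :=
  (∃ g ∈ S, T = g⁻¹ ::ₘ S.erase g) ∨
    (∃ g ∈ S, ∃ h ∈ S.erase g, T = h * g ::ₘ S.erase g ∨ T = g * h ::ₘ S.erase g)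

/-- Nielsen equivalence: one multiset is obtained from the other by a finite
sequence of Nielsen moves. -/
def NielsenEquiv (S T : Multiset G) : Prop :=
  Relation.ReflTransGen NielsenMove S T

/-- The elements of the multiset `S` lie in pairwise distinct left cosets of `H`. -/
def LeftDistinct (H : Subgroup G) (S : Multiset G) : Prop :=
  (S.map fun x => ((x : G) : G ⧸ H)).Nodup

/-- The elements of the multiset `S` lie in pairwise distinct right cosets of `H`
(using that `Hx = Hy ↔ x⁻¹H = y⁻¹H`). -/
def RightDistinct (H : Subgroup G) (S : Multiset G) : Prop :=
  (S.map fun x => ((x⁻¹ : G) : G ⧸ H)).Nodup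

/-- `T` is a left transversal of `H`: it contains exactly one element of each
left coset of `H`. -/
def IsLeftTransversal (H : Subgroup G) (T : Set G) : Prop :=
  ∀ g : G, ∃! t, t ∈ T ∧ ((t : G) : G ⧸ H) = ((g : G) : G ⧸ H)

/-- `T` is a right transversal of `H`: it contains exactly one element of each
right coset of `H` (using that `Hx = Hy ↔ x⁻¹H = y⁻¹H`). -/
def IsRightTransversal (H : Subgroup G) (T : Set G) : Prop :=
  ∀ g : G, ∃! t, t ∈ T ∧ ((t⁻¹ : G) : G ⧸ H) = ((g⁻¹ : G) : G ⧸ H)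

/-- The left coset `aH` as a set. -/
def lcoset (a : G) (H : Subgroup G) : Set G := {x | a⁻¹ * x ∈ H}

/-- The right coset `Ha` as a set. -/
def rcoset (H : Subgroup G) (a : G) : Set G := {x | x * a⁻¹ ∈ H}

/-- The double coset `HgH` as a set. -/
def dcoset (H : Subgroup G) (g : G) : Set G := {x | ∃ h₁ ∈ H, ∃ h₂ ∈ H, x = h₁ * g * h₂}

/-- `S` is left-right clean relative to `H`: `S ∖ H` is nonempty and its elements
lie in pairwise distinct left cosets and pairwise distinct right cosets of `H`. -/
def LeftRightClean (H : Subgroup G) (S : Multiset G) : Prop :=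
  (∃ x ∈ S, x ∉ H) ∧
    LeftDistinct H (S.filter fun x => x ∉ H) ∧
    RightDistinct H (S.filter fun x => x ∉ H)

end Defs

section Aux

variable {G : Type*} [Group G]

lemma erase_pair (x y : G) : ({x, y} : Multiset G).erase x = {y} :=
  Multiset.erase_cons_head x {y}

lemma move_inv (x y : G) : NielsenMove ({x, y} : Multiset G) {x⁻¹, y} :=
  Or.inl ⟨x, by simp, by rw [erase_pair]; rfl⟩

lemma move_mul_left (x y : G) : NielsenMove ({x, y} : Multiset G) {y * x, y} :=
  Or.inr ⟨x, by simp, y, by rw [erase_pair]; simp, Or.inl (by rw [erase_pair]; rfl)⟩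

lemma equiv_mul_inv (x y : G) : NielsenEquiv ({x, y} : Multiset G) {x * y⁻¹, y} := by
  have h1 := move_inv x y
  have h2 := move_mul_left x⁻¹ y
  have h3 := move_inv (y * x⁻¹) y
  have : (y * x⁻¹)⁻¹ = x * y⁻¹ := by group
  rw [this] at h3
  exact Relation.ReflTransGen.head h1 (Relation.ReflTransGen.head h2
    (Relation.ReflTransGen.single h3))

lemma equiv_mul_inv_pow (x y : G) (k : ℕ) :
    NielsenEquiv ({x, y} : Multiset G) {x * (y⁻¹) ^ k, y} := by
  induction k with
  | zero => simp only [pow_zero, mul_one]; exact Relation.ReflTransGen.refl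
  | succ n ih =>
    have := equiv_mul_inv (x * y⁻¹ ^ n) y
    rw [mul_assoc, ← pow_succ] at this
    exact ih.trans this

lemma pair_comm' (x y : G) : ({x, y} : Multiset G) = {y, x} := Multiset.cons_swap x y 0

end Aux

/-- in a finite cyclic group `H`, any pair `{x, y}` is Nielsen
equivalent to a pair `{z, 1}` containing the identity. -/
theorem stmt9 {H : Type*} [Group H] [Finite H] [IsCyclic H] (x y : H) :
    ∃ z : H, NielsenEquiv ({x, y} : Multiset H) ({z, 1} : Multiset H) := by
  obtain ⟨g, hg⟩ := IsCyclic.exists_generator (α := H)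
  have hpow : ∀ h : H, ∃ n : ℕ, g ^ n = h := fun h => by
    have := mem_powers_iff_mem_zpowers.mpr (hg h)
    exact this
  obtain ⟨a, ha⟩ := hpow x
  obtain ⟨b, hb⟩ := hpow y
  subst ha hb
  clear hpow hg
  induction b using Nat.strong_induction_on generalizing a with
  | _ b ih =>
    rcases Nat.eq_zero_or_pos b with hb0 | hbpos
    · exact ⟨g ^ a, by rw [hb0, pow_zero]; exact Relation.ReflTransGen.refl⟩
    · have key : g ^ a * ((g ^ b)⁻¹) ^ (a / b) = g ^ (a % b) := by
        rw [inv_pow, ← pow_mul, ← zpow_natCast g a, ← zpow_natCast g (b * (a/b)),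
          ← zpow_neg, ← zpow_add, ← zpow_natCast g (a % b)]
        congr 1
        have := Nat.div_add_mod a b
        omega
      have h1 := equiv_mul_inv_pow (g ^ a) (g ^ b) (a / b)
      rw [key] at h1
      obtain ⟨z, hz⟩ := ih (a % b) (Nat.mod_lt a hbpos) b
      exact ⟨z, h1.trans ((pair_comm' (g ^ (a % b)) (g ^ b)) ▸ hz)⟩
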